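/- arXiv:2512.03483 — 4 statements merged into one kernel-verified Lean document; each statement's English description precedes it below -/
import Mathlib

section
/- Let α ∈ (0, 1/2) and β ∈ [0, 1]. There exists a constant c > 0 such that for every h ∈ (0, 1], h² · ∫₀^∞ (r^(−α) / (1 + r^(β/2))) · min{ h^(−2α), h^(−2−2α) / (1 + r) } dr ≤ c · h^β. -/
open Real MeasureTheory Set

/-- Specialization of the contour-integral bound (4.23) with θ₁ = 0, θ₂ = β:
for α ∈ (0, 1/2) and β ∈ [0, 1] there is c > 0 such that for all h ∈ (0, 1],
h² ∫₀^∞ (r^(−α)/(1 + r^(β/2))) · min{h^(−2α), h^(−2−2α)/(1 + r)} dr ≤ c h^β. -/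
theorem integral_bound_theta0 (α β : ℝ) (hα : α ∈ Set.Ioo 0 (1/2))
    (hβ : β ∈ Set.Icc (0:ℝ) 1) :
    ∃ c : ℝ, 0 < c ∧ ∀ h ∈ Set.Ioc (0:ℝ) 1,
      h ^ 2 * ∫ r in Set.Ioi (0:ℝ),
        (r ^ (-α) / (1 + r ^ (β / 2))) *
          min (h ^ (-(2 * α))) (h ^ (-2 - 2 * α) / (1 + r))
      ≤ c * h ^ β := by
  obtain ⟨hα0, hα2⟩ := hα
  obtain ⟨hβ0, hβ1⟩ := hβ
  have hs : 0 < α + β/2 := by linarith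
  have hs1 : α + β/2 < 1 := by linarith
  have hs2 : 0 < 1 - α - β/2 := by linarith
  refine ⟨1/(1 - α - β/2) + 1/(α + β/2), by positivity, ?_⟩
  rintro h ⟨hh0, hh1⟩
  set p : ℝ := -α - β/2 with hp
  set q : ℝ := -α - β/2 - 1 with hq
  have hp1 : (0:ℝ) < p + 1 := by rw [hp]; linarith
  have hq1 : q < -1 := by rw [hq]; linarith
  set T : ℝ := h ^ (-2 : ℝ) with hT
  have hT0 : 0 < T := rpow_pos_of_pos hh0 _
  set g : ℝ → ℝ := fun r => if r ≤ T then h ^ (-(2*α)) * r ^ p else h ^ (-2 - 2*α) * r ^ q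
    with hg
  have hbound : ∀ r ∈ Ioi (0:ℝ),
      (r ^ (-α) / (1 + r ^ (β / 2))) * min (h ^ (-(2 * α))) (h ^ (-2 - 2 * α) / (1 + r))
        ≤ g r := by
    intro r hr
    have hr0 : (0:ℝ) < r := hr
    have hrb : (0:ℝ) < r ^ (β/2) := rpow_pos_of_pos hr0 _
    have hfac : r ^ (-α) / (1 + r ^ (β/2)) ≤ r ^ p := by
      have h1 : r ^ (-α) / (1 + r ^ (β/2)) ≤ r ^ (-α) / r ^ (β/2) := by
        apply div_le_div_of_nonneg_left (rpow_nonneg hr0.le _) hrb (by linarith)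
      calc r ^ (-α) / (1 + r ^ (β/2)) ≤ r ^ (-α) / r ^ (β/2) := h1
        _ = r ^ p := by rw [hp, ← rpow_sub hr0]
    have hminnn : 0 ≤ min (h ^ (-(2 * α))) (h ^ (-2 - 2 * α) / (1 + r)) :=
      le_min (rpow_nonneg hh0.le _) (by positivity)
    rw [hg]
    by_cases hrT : r ≤ T
    · simp only [if_pos hrT]
      calc (r ^ (-α) / (1 + r ^ (β / 2))) * min (h ^ (-(2 * α))) (h ^ (-2 - 2 * α) / (1 + r))
          ≤ r ^ p * h ^ (-(2*α)) :=
            mul_le_mul hfac (min_le_left _ _) hminnn (rpow_nonneg hr0.le _)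
        _ = h ^ (-(2*α)) * r ^ p := mul_comm _ _
    · simp only [if_neg hrT]
      have hmin2 : min (h ^ (-(2 * α))) (h ^ (-2 - 2 * α) / (1 + r))
          ≤ h ^ (-2 - 2*α) / r := by
        refine (min_le_right _ _).trans ?_
        exact div_le_div_of_nonneg_left (rpow_nonneg hh0.le _) hr0 (by linarith)
      calc (r ^ (-α) / (1 + r ^ (β / 2))) * min (h ^ (-(2 * α))) (h ^ (-2 - 2 * α) / (1 + r))
          ≤ r ^ p * (h ^ (-2 - 2*α) / r) :=
            mul_le_mul hfac hmin2 hminnn (rpow_nonneg hr0.le _)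
        _ = h ^ (-2 - 2*α) * r ^ q := by
            have hrq : r ^ q = r ^ p * r⁻¹ := by
              rw [← rpow_neg_one r, ← rpow_add hr0, hq, hp]
              ring_nf
            rw [hrq]; ring
  have hnn : ∀ r ∈ Ioi (0:ℝ),
      0 ≤ (r ^ (-α) / (1 + r ^ (β / 2))) * min (h ^ (-(2 * α))) (h ^ (-2 - 2 * α) / (1 + r)) := by
    intro r hr
    have hr0 : (0:ℝ) < r := hr
    have h1 : 0 ≤ r ^ (-α) / (1 + r ^ (β/2)) := by positivity
    exact mul_nonneg h1 (le_min (rpow_nonneg hh0.le _) (by positivity))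
  -- integrability of g
  have hint1 : IntegrableOn (fun r => h ^ (-(2*α)) * r ^ p) (Ioc 0 T) := by
    rw [integrableOn_Ioc_iff_integrableOn_Ioo]
    exact ((intervalIntegral.integrableOn_Ioo_rpow_iff hT0).2 (by linarith)).const_mul _
  have hint2 : IntegrableOn (fun r => h ^ (-2 - 2*α) * r ^ q) (Ioi T) :=
    (integrableOn_Ioi_rpow_of_lt hq1 hT0).const_mul _
  have heq1 : EqOn (fun r => h ^ (-(2*α)) * r ^ p) g (Ioc 0 T) := fun r hr => by
    simp only [hg, if_pos hr.2]
  have heq2 : EqOn (fun r => h ^ (-2 - 2*α) * r ^ q) g (Ioi T) := fun r hr => by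
    simp only [hg, if_neg (not_le.2 (mem_Ioi.1 hr))]
  have hg1 : IntegrableOn g (Ioc 0 T) := hint1.congr_fun heq1 measurableSet_Ioc
  have hg2 : IntegrableOn g (Ioi T) := hint2.congr_fun heq2 measurableSet_Ioi
  have hgint : IntegrableOn g (Ioi 0) := by
    rw [← Ioc_union_Ioi_eq_Ioi hT0.le]
    exact hg1.union hg2
  have hI : (∫ r in Ioi (0:ℝ),
        (r ^ (-α) / (1 + r ^ (β / 2))) * min (h ^ (-(2 * α))) (h ^ (-2 - 2 * α) / (1 + r)))
      ≤ ∫ r in Ioi (0:ℝ), g r :=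
    integral_mono_of_nonneg (ae_restrict_of_forall_mem measurableSet_Ioi hnn) hgint
      (ae_restrict_of_forall_mem measurableSet_Ioi hbound)
  -- compute ∫ g
  have hsplit : (∫ r in Ioi (0:ℝ), g r)
      = (∫ r in Ioc (0:ℝ) T, g r) + ∫ r in Ioi T, g r := by
    rw [← Ioc_union_Ioi_eq_Ioi hT0.le,
      setIntegral_union (Ioc_disjoint_Ioi le_rfl) measurableSet_Ioi hg1 hg2]
  have hc1 : (∫ r in Ioc (0:ℝ) T, g r) = h ^ (-(2*α)) * (T ^ (p+1) / (p+1)) := by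
    rw [setIntegral_congr_fun measurableSet_Ioc heq1.symm]
    rw [integral_const_mul]
    congr 1
    rw [← intervalIntegral.integral_of_le hT0.le, integral_rpow (Or.inl (by linarith))]
    rw [zero_rpow (by linarith : p + 1 ≠ 0)]
    ring
  have hc2 : (∫ r in Ioi T, g r) = h ^ (-2 - 2*α) * (T ^ (q+1) / (α + β/2)) := by
    rw [setIntegral_congr_fun measurableSet_Ioi heq2.symm, integral_const_mul,
      integral_Ioi_rpow_of_lt hq1 hT0]
    congr 1
    have hq2 : q + 1 = -(α + β/2) := by rw [hq]; ring
    rw [hq2, neg_div_neg_eq]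
  -- final arithmetic
  have hTp : T ^ (p+1) = h ^ ((-2) * (p+1)) := (rpow_mul hh0.le (-2) (p+1)).symm
  have hTq : T ^ (q+1) = h ^ ((-2) * (q+1)) := (rpow_mul hh0.le (-2) (q+1)).symm
  have h2r : h ^ 2 = h ^ (2:ℝ) := by
    rw [← rpow_natCast h 2]; norm_num
  have hb1 : h ^ (2:ℝ) * (h ^ (-(2*α)) * h ^ ((-2) * (p+1))) = h ^ β := by
    rw [← rpow_add hh0, ← rpow_add hh0]; congr 1; rw [hp]; ring
  have hb2 : h ^ (2:ℝ) * (h ^ (-2 - 2*α) * h ^ ((-2) * (q+1))) = h ^ β := by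
    rw [← rpow_add hh0, ← rpow_add hh0]; congr 1; rw [hq]; ring
  calc h ^ 2 * ∫ r in Set.Ioi (0:ℝ),
        (r ^ (-α) / (1 + r ^ (β / 2))) *
          min (h ^ (-(2 * α))) (h ^ (-2 - 2 * α) / (1 + r))
      ≤ h ^ 2 * ∫ r in Ioi (0:ℝ), g r := by
        apply mul_le_mul_of_nonneg_left hI (by positivity)
    _ = (1/(1 - α - β/2) + 1/(α + β/2)) * h ^ β := by
        rw [hsplit, hc1, hc2, hTp, hTq, h2r]
        have e1 : h ^ (2:ℝ) * (h ^ (-(2*α)) * (h ^ ((-2) * (p+1)) / (p+1))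
              + h ^ (-2 - 2*α) * (h ^ ((-2) * (q+1)) / (α + β/2)))
            = (h ^ (2:ℝ) * (h ^ (-(2*α)) * h ^ ((-2) * (p+1)))) * (1/(p+1))
              + (h ^ (2:ℝ) * (h ^ (-2 - 2*α) * h ^ ((-2) * (q+1)))) * (1/(α + β/2)) := by
          ring
        rw [e1, hb1, hb2]
        have : p + 1 = 1 - α - β/2 := by rw [hp]; ring
        rw [this]; ring
end

section
/- Let α ∈ (0, 1/2). There exists a constant c > 0 such that for every h ∈ (0, 1], h² · ∫₀^∞ (r^(−α) / (1 + r^(1−α))) · min{ h^(−1−2α), h^(−3−2α) / (1 + r) } dr ≤ c · h^(1−2α) · log(1 + 1/h). -/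
open Real MeasureTheory

open Set

/-- Specialization of the contour-integral bound (4.23) with θ₁ = 1, θ₂ = 2 − 2α:
for α ∈ (0, 1/2) there is c > 0 such that for all h ∈ (0, 1],
h² ∫₀^∞ (r^(−α)/(1 + r^(1−α))) · min{h^(−1−2α), h^(−3−2α)/(1 + r)} dr
  ≤ c h^(1−2α) log(1 + 1/h). -/
theorem integral_bound_theta1 (α : ℝ) (hα : α ∈ Set.Ioo 0 (1/2)) :
    ∃ c : ℝ, 0 < c ∧ ∀ h ∈ Set.Ioc (0:ℝ) 1,
      h ^ 2 * ∫ r in Set.Ioi (0:ℝ),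
        (r ^ (-α) / (1 + r ^ (1 - α))) *
          min (h ^ (-1 - 2 * α)) (h ^ (-3 - 2 * α) / (1 + r))
      ≤ c * h ^ (1 - 2 * α) * Real.log (1 + 1 / h) := by
  obtain ⟨hα0, hα2⟩ := hα
  refine ⟨7, by norm_num, ?_⟩
  rintro h ⟨hh0, hh1⟩
  set f : ℝ → ℝ := fun r => (r ^ (-α) / (1 + r ^ (1 - α))) *
      min (h ^ (-1 - 2 * α)) (h ^ (-3 - 2 * α) / (1 + r)) with hfdef
  set T : ℝ := h ^ (-2 : ℝ) with hTdef
  have hT0 : 0 < T := rpow_pos_of_pos hh0 _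
  have hT1 : (1:ℝ) ≤ T := one_le_rpow_of_pos_of_le_one_of_nonpos hh0 hh1 (by norm_num)
  have hp1 : (0:ℝ) < h ^ (-1 - 2 * α) := rpow_pos_of_pos hh0 _
  have hp3 : (0:ℝ) < h ^ (-3 - 2 * α) := rpow_pos_of_pos hh0 _
  -- measurability of f
  have hfm : Measurable f := by
    rw [hfdef]; fun_prop
  -- nonnegativity of f on Ioi 0
  have hfnn : ∀ r ∈ Ioi (0:ℝ), 0 ≤ f r := by
    intro r hr
    have hr0 : (0:ℝ) < r := hr
    have h1 : (0:ℝ) ≤ r ^ (-α) := (rpow_pos_of_pos hr0 _).le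
    have h2 : (0:ℝ) < 1 + r ^ (1 - α) := by positivity
    have h3 : (0:ℝ) < 1 + r := by linarith
    exact mul_nonneg (div_nonneg h1 h2.le) (le_min hp1.le (div_nonneg hp3.le h3.le))
  -- the factor bound: r^{-α}/(1+r^{1-α}) ≤ r⁻¹ for r ≥ 1... and ≤ r^{-α} always
  have hfac1 : ∀ r ∈ Ioi (0:ℝ), r ^ (-α) / (1 + r ^ (1 - α)) ≤ r ^ (-α) := by
    intro r hr
    have hr0 : (0:ℝ) < r := hr
    exact div_le_self (rpow_pos_of_pos hr0 _).le
      (le_add_of_nonneg_right (rpow_pos_of_pos hr0 _).le)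
  have hfacinv : ∀ r : ℝ, 1 ≤ r → r ^ (-α) / (1 + r ^ (1 - α)) ≤ r⁻¹ := by
    intro r hr
    have hr0 : (0:ℝ) < r := lt_of_lt_of_le one_pos hr
    have h2 : (0:ℝ) < r ^ (1 - α) := rpow_pos_of_pos hr0 _
    have key : r ^ (-α) / (1 + r ^ (1 - α)) ≤ r ^ (-α) / r ^ (1 - α) := by
      apply div_le_div_of_nonneg_left (rpow_pos_of_pos hr0 _).le h2
      linarith
    have : r ^ (-α) / r ^ (1 - α) = r⁻¹ := by
      rw [← Real.rpow_sub hr0]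
      rw [← Real.rpow_neg_one r]
      ring_nf
    linarith [key, this.le, this.ge]
  -- dominating functions
  set g1 : ℝ → ℝ := fun r => h ^ (-1 - 2 * α) * r ^ (-α) with hg1def
  set g2 : ℝ → ℝ := fun r => h ^ (-1 - 2 * α) * r⁻¹ with hg2def
  set g3 : ℝ → ℝ := fun r => h ^ (-3 - 2 * α) * r ^ (-2 : ℝ) with hg3def
  -- integrability of dominators
  have hig1 : IntegrableOn g1 (Ioc (0:ℝ) 1) := by
    have := (intervalIntegral.intervalIntegrable_rpow' (a := 0) (b := 1)
      (r := -α) (by linarith)).const_mul (h ^ (-1 - 2 * α))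
    simpa [intervalIntegrable_iff, uIoc_of_le (zero_le_one)] using this
  have hig2 : IntegrableOn g2 (Ioc (1:ℝ) T) := by
    have hcont : ContinuousOn g2 (Icc (1:ℝ) T) := by
      apply ContinuousOn.mul continuousOn_const
      apply ContinuousOn.inv₀ continuousOn_id
      intro x hx
      exact ne_of_gt (lt_of_lt_of_le one_pos hx.1)
    exact (hcont.integrableOn_Icc).mono_set Ioc_subset_Icc_self
  have hig3 : IntegrableOn g3 (Ioi T) := by
    exact (integrableOn_Ioi_rpow_of_lt (by norm_num) hT0).const_mul _
  -- pointwise bounds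
  have hb1 : ∀ r ∈ Ioc (0:ℝ) 1, f r ≤ g1 r := by
    intro r hr
    have hr0 : (0:ℝ) < r := hr.1
    calc f r ≤ r ^ (-α) * (h ^ (-1 - 2 * α)) := by
          apply mul_le_mul (hfac1 r hr0) (min_le_left _ _) _ (rpow_pos_of_pos hr0 _).le
          have : (0:ℝ) < 1 + r := by linarith
          exact le_min hp1.le (div_nonneg hp3.le this.le)
      _ = g1 r := by simp [hg1def, mul_comm]
  have hb2 : ∀ r ∈ Ioc (1:ℝ) T, f r ≤ g2 r := by
    intro r hr
    have hr1 : (1:ℝ) ≤ r := hr.1.le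
    have hr0 : (0:ℝ) < r := lt_of_lt_of_le one_pos hr1
    calc f r ≤ r⁻¹ * (h ^ (-1 - 2 * α)) := by
          apply mul_le_mul (hfacinv r hr1) (min_le_left _ _) _ (by positivity)
          have : (0:ℝ) < 1 + r := by linarith
          exact le_min hp1.le (div_nonneg hp3.le this.le)
      _ = g2 r := by simp [hg2def, mul_comm]
  have hb3 : ∀ r ∈ Ioi T, f r ≤ g3 r := by
    intro r hr
    have hr1 : (1:ℝ) ≤ r := le_trans hT1 (le_of_lt hr)
    have hr0 : (0:ℝ) < r := lt_of_lt_of_le one_pos hr1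
    have hmin : min (h ^ (-1 - 2 * α)) (h ^ (-3 - 2 * α) / (1 + r))
        ≤ h ^ (-3 - 2 * α) / r := by
      refine le_trans (min_le_right _ _) ?_
      apply div_le_div_of_nonneg_left hp3.le hr0
      linarith
    calc f r ≤ r⁻¹ * (h ^ (-3 - 2 * α) / r) := by
          apply mul_le_mul (hfacinv r hr1) hmin _ (by positivity)
          have : (0:ℝ) < 1 + r := by linarith
          exact le_min hp1.le (div_nonneg hp3.le this.le)
      _ = g3 r := by
          have hrr : r ^ (-2:ℝ) = (r * r)⁻¹ := by
            rw [show (-2:ℝ) = -1 + -1 by norm_num, Real.rpow_add hr0,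
              Real.rpow_neg_one, mul_inv]
          simp only [hg3def, hrr]
          field_simp
  -- integrability of f on each piece
  have haem : ∀ s : Set ℝ, AEStronglyMeasurable f (volume.restrict s) :=
    fun s => hfm.aestronglyMeasurable
  have hif1 : IntegrableOn f (Ioc (0:ℝ) 1) := by
    apply hig1.mono' (haem _)
    rw [ae_restrict_iff' measurableSet_Ioc]
    refine ae_of_all _ fun r hr => ?_
    rw [Real.norm_of_nonneg (hfnn r hr.1)]
    exact hb1 r hr
  have hif2 : IntegrableOn f (Ioc (1:ℝ) T) := by
    apply hig2.mono' (haem _)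
    rw [ae_restrict_iff' measurableSet_Ioc]
    refine ae_of_all _ fun r hr => ?_
    rw [Real.norm_of_nonneg (hfnn r (lt_of_lt_of_le one_pos hr.1.le))]
    exact hb2 r hr
  have hif3 : IntegrableOn f (Ioi T) := by
    apply hig3.mono' (haem _)
    rw [ae_restrict_iff' measurableSet_Ioi]
    refine ae_of_all _ fun r hr => ?_
    rw [Real.norm_of_nonneg (hfnn r (lt_of_lt_of_le hT0 (le_of_lt hr)))]
    exact hb3 r hr
  -- split the integral
  have hsplit2 : Ioc (0:ℝ) 1 ∪ Ioc (1:ℝ) T = Ioc (0:ℝ) T :=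
    Ioc_union_Ioc_eq_Ioc zero_le_one hT1
  have hsplit1 : Ioc (0:ℝ) T ∪ Ioi T = Ioi (0:ℝ) :=
    Ioc_union_Ioi_eq_Ioi hT0.le
  have hifT : IntegrableOn f (Ioc (0:ℝ) T) := by
    rw [← hsplit2]; exact hif1.union hif2
  have hEq : ∫ r in Ioi (0:ℝ), f r
      = (∫ r in Ioc (0:ℝ) 1, f r) + (∫ r in Ioc (1:ℝ) T, f r) + (∫ r in Ioi T, f r) := by
    rw [← hsplit1, setIntegral_union (Set.Ioc_disjoint_Ioi le_rfl) measurableSet_Ioi hifT hif3,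
      ← hsplit2, setIntegral_union (Set.Ioc_disjoint_Ioc.mpr (by simp)) measurableSet_Ioc hif1 hif2]
  -- bound the three pieces
  have hI1 : ∫ r in Ioc (0:ℝ) 1, f r ≤ h ^ (-1 - 2 * α) * (1 / (1 - α)) := by
    have hmono : ∫ r in Ioc (0:ℝ) 1, f r ≤ ∫ r in Ioc (0:ℝ) 1, g1 r :=
      setIntegral_mono_on hif1 hig1 measurableSet_Ioc hb1
    have hval : ∫ r in Ioc (0:ℝ) 1, g1 r = h ^ (-1 - 2 * α) * (1 / (1 - α)) := by
      rw [hg1def]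
      rw [integral_const_mul]
      rw [← intervalIntegral.integral_of_le zero_le_one]
      rw [integral_rpow (Or.inl (by linarith))]
      rw [Real.one_rpow, Real.zero_rpow (by linarith : -α + 1 ≠ 0)]
      ring_nf
    linarith [hmono, hval.le, hval.ge]
  have hI2 : ∫ r in Ioc (1:ℝ) T, f r ≤ h ^ (-1 - 2 * α) * Real.log T := by
    have hmono : ∫ r in Ioc (1:ℝ) T, f r ≤ ∫ r in Ioc (1:ℝ) T, g2 r :=
      setIntegral_mono_on hif2 hig2 measurableSet_Ioc hb2
    have hval : ∫ r in Ioc (1:ℝ) T, g2 r = h ^ (-1 - 2 * α) * Real.log T := by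
      rw [hg2def, integral_const_mul, ← intervalIntegral.integral_of_le hT1,
        integral_inv_of_pos one_pos hT0, div_one]
    linarith [hmono, hval.le, hval.ge]
  have hTinv : ∫ r in Ioi T, ((fun x : ℝ => x ^ (-2 : ℝ)) r) = T⁻¹ := by
    rw [integral_Ioi_rpow_of_lt (by norm_num) hT0]
    norm_num [← Real.rpow_neg_one T]
  have hI3 : ∫ r in Ioi T, f r ≤ h ^ (-1 - 2 * α) := by
    have hmono : ∫ r in Ioi T, f r ≤ ∫ r in Ioi T, g3 r :=
      setIntegral_mono_on hif3 hig3 measurableSet_Ioi hb3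
    have hval : ∫ r in Ioi T, g3 r = h ^ (-3 - 2 * α) * T⁻¹ := by
      rw [hg3def, integral_const_mul, hTinv]
    have hTi : h ^ (-3 - 2 * α) * T⁻¹ = h ^ (-1 - 2 * α) := by
      rw [hTdef, ← Real.rpow_neg_one (h ^ (-2:ℝ)), ← Real.rpow_mul hh0.le,
        ← Real.rpow_add hh0]
      ring_nf
    linarith [hmono, hval.le, hval.ge, hTi.le, hTi.ge]
  -- logarithm estimates
  set L : ℝ := Real.log (1 + 1 / h) with hLdef
  have hinv1 : (1:ℝ) ≤ 1 / h := (le_div_iff₀ hh0).2 (by linarith)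
  have hL2 : Real.log 2 ≤ L := by
    apply Real.log_le_log (by norm_num)
    linarith
  have hL06 : (0.6:ℝ) ≤ L := by
    have := Real.log_two_gt_d9
    linarith
  have hlogT : Real.log T ≤ 2 * L := by
    rw [hTdef, Real.log_rpow hh0]
    have h1 : Real.log h = - Real.log (1 / h) := by
      rw [one_div, Real.log_inv]; ring
    rw [h1]
    have h2 : Real.log (1 / h) ≤ L := by
      apply Real.log_le_log (by positivity)
      linarith
    have h3 : (0:ℝ) ≤ Real.log (1 / h) := Real.log_nonneg hinv1
    linarith
  have hαbound : 1 / (1 - α) ≤ 2 := by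
    rw [div_le_iff₀ (by linarith)]
    linarith
  -- put it together
  have htotal : ∫ r in Ioi (0:ℝ), f r ≤ h ^ (-1 - 2 * α) * (7 * L) := by
    rw [hEq]
    have hsum : (1 / (1 - α)) + Real.log T + 1 ≤ 7 * L := by nlinarith
    have := add_le_add (add_le_add hI1 hI2) hI3
    calc (∫ r in Ioc (0:ℝ) 1, f r) + (∫ r in Ioc (1:ℝ) T, f r) + (∫ r in Ioi T, f r)
        ≤ h ^ (-1 - 2 * α) * (1 / (1 - α)) + h ^ (-1 - 2 * α) * Real.log T
          + h ^ (-1 - 2 * α) := this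
      _ = h ^ (-1 - 2 * α) * ((1 / (1 - α)) + Real.log T + 1) := by ring
      _ ≤ h ^ (-1 - 2 * α) * (7 * L) := by
          apply mul_le_mul_of_nonneg_left hsum hp1.le
  have hpow : h ^ 2 * h ^ (-1 - 2 * α) = h ^ (1 - 2 * α) := by
    rw [← Real.rpow_natCast h 2, ← Real.rpow_add hh0]
    congr 1
    push_cast
    ring
  have hh2 : (0:ℝ) ≤ h ^ 2 := by positivity
  calc h ^ 2 * ∫ r in Ioi (0:ℝ), f r
      ≤ h ^ 2 * (h ^ (-1 - 2 * α) * (7 * L)) := mul_le_mul_of_nonneg_left htotal hh2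
    _ = (h ^ 2 * h ^ (-1 - 2 * α)) * (7 * L) := by ring
    _ = 7 * h ^ (1 - 2 * α) * L := by rw [hpow]; ring
end

section
/- Let α ∈ (1/4, 1/2). There exists a constant c > 0 such that for every h ∈ (0, 1], h² · ∫₀^∞ (r^(−α) / (1 + r^((1−2α)/2))) · min{ 1 / (1 + r^(1/2 − α)), h^(−1−2α) / (1 + r) } dr ≤ c · h^(2−2α). -/
open Real MeasureTheory

/-- Specialization of the contour-integral bound (4.23) with θ₁ = −1, θ₂ = 1 − 2α:
for α ∈ (1/4, 1/2) there is c > 0 such that for all h ∈ (0, 1],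
h² ∫₀^∞ (r^(−α)/(1 + r^((1−2α)/2))) · min{1/(1 + r^(1/2−α)), h^(−1−2α)/(1 + r)} dr
  ≤ c h^(2−2α). -/
theorem integral_bound_theta_neg1 (α : ℝ) (hα : α ∈ Set.Ioo (1/4 : ℝ) (1/2)) :
    ∃ c : ℝ, 0 < c ∧ ∀ h ∈ Set.Ioc (0:ℝ) 1,
      h ^ 2 * ∫ r in Set.Ioi (0:ℝ),
        (r ^ (-α) / (1 + r ^ ((1 - 2 * α) / 2))) *
          min (1 / (1 + r ^ (1 / 2 - α))) (h ^ (-1 - 2 * α) / (1 + r))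
      ≤ c * h ^ (2 - 2 * α) := by
  obtain ⟨hα1, hα2⟩ := hα
  have hα0 : (0:ℝ) < α := by linarith
  have h1α : (0:ℝ) < 1 - α := by linarith
  refine ⟨1/(1-α) + 1/α + 2, by positivity, ?_⟩
  rintro h ⟨hh0, hh1⟩
  set C : ℝ := h ^ (-1 - 2*α) with hCdef
  have hC0 : 0 < C := rpow_pos_of_pos hh0 _
  set R : ℝ := h ^ (-2 : ℝ) with hRdef
  have hR0 : 0 < R := rpow_pos_of_pos hh0 _
  have hR1 : (1:ℝ) ≤ R := by
    rw [hRdef]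
    calc (1:ℝ) = h ^ (0:ℝ) := (rpow_zero h).symm
    _ ≤ h ^ (-2:ℝ) := rpow_le_rpow_of_exponent_ge hh0 hh1 (by norm_num)
  set f : ℝ → ℝ := fun r =>
      (r ^ (-α) / (1 + r ^ ((1 - 2 * α) / 2))) *
        min (1 / (1 + r ^ (1 / 2 - α))) (h ^ (-1 - 2 * α) / (1 + r)) with hfdef
  set G : ℝ → ℝ := fun r => min (r ^ (-α)) (min (r ^ (α - 1)) (C * r ^ (-(3/2) : ℝ))) with hGdef
  have hGm : Measurable G := by fun_prop
  -- pointwise nonnegativity and bound f ≤ G on Ioi 0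
  have hf0 : ∀ r ∈ Set.Ioi (0:ℝ), 0 ≤ f r := by
    intro r hr
    have hr0 : (0:ℝ) < r := hr
    have h1 : (0:ℝ) < 1 + r ^ ((1 - 2 * α) / 2) := by positivity
    have h2 : (0:ℝ) < 1 + r ^ (1 / 2 - α) := by positivity
    have h3 : (0:ℝ) < 1 + r := by positivity
    have hra : (0:ℝ) ≤ r ^ (-α) := (rpow_pos_of_pos hr0 _).le
    apply mul_nonneg (div_nonneg hra h1.le)
    exact le_min (by positivity) (by positivity)
  have hfG : ∀ r ∈ Set.Ioi (0:ℝ), f r ≤ G r := by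
    intro r hr
    have hr0 : (0:ℝ) < r := hr
    have hβ : (1 - 2 * α) / 2 = 1/2 - α := by ring
    have hpβ : (0:ℝ) < r ^ (1/2 - α) := rpow_pos_of_pos hr0 _
    have hd1 : (0:ℝ) < 1 + r ^ (1/2 - α) := by positivity
    have hd2 : (0:ℝ) < 1 + r := by positivity
    have hra : (0:ℝ) ≤ r ^ (-α) := (rpow_pos_of_pos hr0 _).le
    have hA1 : r ^ (-α) / (1 + r ^ ((1-2*α)/2)) ≤ r ^ (-α) := by
      rw [hβ]
      exact div_le_self hra (by linarith)
    have hA2 : r ^ (-α) / (1 + r ^ ((1-2*α)/2)) ≤ r ^ (-α) * r ^ (-(1/2 - α)) := by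
      rw [hβ]
      have : r ^ (-α) / (1 + r ^ (1/2 - α)) ≤ r ^ (-α) / r ^ (1/2 - α) := by
        gcongr
        linarith
      calc r ^ (-α) / (1 + r ^ (1/2 - α)) ≤ r ^ (-α) / r ^ (1/2 - α) := this
        _ = r ^ (-α) * r ^ (-(1/2 - α)) := by
            rw [div_eq_mul_inv, ← rpow_neg hr0.le]
    have hm1 : min (1 / (1 + r ^ (1 / 2 - α))) (h ^ (-1 - 2 * α) / (1 + r)) ≤ 1 := by
      refine (min_le_left _ _).trans ?_
      rw [div_le_one hd1]; linarith
    have hm2 : min (1 / (1 + r ^ (1 / 2 - α))) (h ^ (-1 - 2 * α) / (1 + r))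
        ≤ r ^ (-(1/2 - α)) := by
      refine (min_le_left _ _).trans ?_
      rw [rpow_neg hr0.le, one_div, inv_le_inv₀ hd1 hpβ]
      linarith
    have hm3 : min (1 / (1 + r ^ (1 / 2 - α))) (h ^ (-1 - 2 * α) / (1 + r))
        ≤ C * r ^ (-1 : ℝ) := by
      calc min (1 / (1 + r ^ (1 / 2 - α))) (h ^ (-1 - 2 * α) / (1 + r))
          ≤ C / (1 + r) := min_le_right _ _
        _ ≤ C / r := by gcongr; linarith
        _ = C * r ^ (-1 : ℝ) := by rw [Real.rpow_neg_one, div_eq_mul_inv]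
    have hmnn : 0 ≤ min (1 / (1 + r ^ (1 / 2 - α))) (h ^ (-1 - 2 * α) / (1 + r)) :=
      le_min (by positivity) (by positivity)
    have hAnn : 0 ≤ r ^ (-α) / (1 + r ^ ((1-2*α)/2)) := by
      rw [hβ]; positivity
    refine le_min ?_ (le_min ?_ ?_)
    · calc f r ≤ r ^ (-α) * 1 := mul_le_mul hA1 hm1 hmnn hra
        _ = r ^ (-α) := mul_one _
    · calc f r ≤ (r ^ (-α) * r ^ (-(1/2 - α))) * r ^ (-(1/2 - α)) :=
          mul_le_mul hA2 hm2 hmnn (by positivity)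
        _ = r ^ (α - 1) := by
            rw [← rpow_add hr0, ← rpow_add hr0]
            ring_nf
    · calc f r ≤ (r ^ (-α) * r ^ (-(1/2 - α))) * (C * r ^ (-1:ℝ)) :=
          mul_le_mul hA2 hm3 hmnn (by positivity)
        _ = C * r ^ (-(3/2) : ℝ) := by
            rw [← rpow_add hr0]
            rw [mul_comm (r ^ (-α + -(1/2 - α))) _, mul_assoc, ← rpow_add hr0]
            ring_nf
  -- integrability of the majorants
  have ia : IntegrableOn (fun r : ℝ => r ^ (-α)) (Set.Ioc (0:ℝ) 1) :=
    (intervalIntegral.intervalIntegrable_rpow' (by linarith)).1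
  have ib : IntegrableOn (fun r : ℝ => r ^ (α - 1)) (Set.Ioc (1:ℝ) R) := by
    have := (intervalIntegral.intervalIntegrable_rpow' (r := α - 1) (by linarith)
      (a := 1) (b := R))
    exact this.1
  have ic : IntegrableOn (fun r : ℝ => C * r ^ (-(3/2) : ℝ)) (Set.Ioi R) :=
    (integrableOn_Ioi_rpow_of_lt (by norm_num) hR0).const_mul C
  have ic1 : IntegrableOn (fun r : ℝ => C * r ^ (-(3/2) : ℝ)) (Set.Ioi (1:ℝ)) :=
    (integrableOn_Ioi_rpow_of_lt (by norm_num) one_pos).const_mul C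
  -- G nonneg on positives
  have hG0 : ∀ r : ℝ, 0 < r → 0 ≤ G r := by
    intro r hr
    exact le_min (by positivity) (le_min (by positivity) (by positivity))
  have hG1 : IntegrableOn G (Set.Ioc (0:ℝ) 1) := by
    refine ia.mono' hGm.aestronglyMeasurable ?_
    refine (ae_restrict_iff' measurableSet_Ioc).2 (ae_of_all _ fun r hr => ?_)
    rw [Real.norm_eq_abs, abs_of_nonneg (hG0 r hr.1)]
    exact min_le_left _ _
  have hG2 : IntegrableOn G (Set.Ioi (1:ℝ)) := by
    refine ic1.mono' hGm.aestronglyMeasurable ?_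
    refine (ae_restrict_iff' measurableSet_Ioi).2 (ae_of_all _ fun r hr => ?_)
    rw [Real.norm_eq_abs, abs_of_nonneg (hG0 r (lt_trans one_pos hr))]
    exact (min_le_right _ _).trans (min_le_right _ _)
  have hGIoi : IntegrableOn G (Set.Ioi (0:ℝ)) := by
    rw [← Set.Ioc_union_Ioi_eq_Ioi (zero_le_one)]
    exact hG1.union hG2
  -- compare f and G integrals
  have hfint : ∫ r in Set.Ioi (0:ℝ), f r ≤ ∫ r in Set.Ioi (0:ℝ), G r := by
    refine integral_mono_of_nonneg ?_ hGIoi ?_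
    · refine (ae_restrict_iff' measurableSet_Ioi).2 (ae_of_all _ fun r hr => hf0 r hr)
    · refine (ae_restrict_iff' measurableSet_Ioi).2 (ae_of_all _ fun r hr => hfG r hr)
  -- split the G integral
  have hG2a : IntegrableOn G (Set.Ioc (1:ℝ) R) := hG2.mono_set Set.Ioc_subset_Ioi_self
  have hG2b : IntegrableOn G (Set.Ioi R) := hG2.mono_set (Set.Ioi_subset_Ioi hR1)
  have hsplit : ∫ r in Set.Ioi (0:ℝ), G r
      = (∫ r in Set.Ioc (0:ℝ) 1, G r) + ((∫ r in Set.Ioc (1:ℝ) R, G r)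
        + ∫ r in Set.Ioi R, G r) := by
    rw [← setIntegral_union (Set.Ioc_disjoint_Ioi le_rfl) measurableSet_Ioi hG2a hG2b,
      Set.Ioc_union_Ioi_eq_Ioi hR1,
      ← setIntegral_union (Set.Ioc_disjoint_Ioi le_rfl) measurableSet_Ioi hG1 hG2,
      Set.Ioc_union_Ioi_eq_Ioi zero_le_one]
  -- bound each piece
  have hI1 : ∫ r in Set.Ioc (0:ℝ) 1, G r ≤ 1 / (1 - α) := by
    calc ∫ r in Set.Ioc (0:ℝ) 1, G r ≤ ∫ r in Set.Ioc (0:ℝ) 1, r ^ (-α) :=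
        setIntegral_mono_on hG1 ia measurableSet_Ioc (fun r _ => min_le_left _ _)
      _ = 1 / (1 - α) := by
        rw [← intervalIntegral.integral_of_le zero_le_one,
          integral_rpow (Or.inl (by linarith))]
        rw [Real.zero_rpow (by linarith : -α + 1 ≠ 0), Real.one_rpow]
        rw [show -α + 1 = 1 - α by ring]
        norm_num
  have hI2 : ∫ r in Set.Ioc (1:ℝ) R, G r ≤ R ^ α / α := by
    calc ∫ r in Set.Ioc (1:ℝ) R, G r ≤ ∫ r in Set.Ioc (1:ℝ) R, r ^ (α - 1) :=
        setIntegral_mono_on hG2a ib measurableSet_Ioc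
          (fun r _ => (min_le_right _ _).trans (min_le_left _ _))
      _ = (R ^ α - 1) / α := by
        rw [← intervalIntegral.integral_of_le hR1,
          integral_rpow (Or.inl (by linarith))]
        rw [Real.one_rpow, show α - 1 + 1 = α by ring]
      _ ≤ R ^ α / α := by
        have : (0:ℝ) ≤ R ^ α := (rpow_pos_of_pos hR0 _).le
        gcongr
        linarith
  have hI3 : ∫ r in Set.Ioi R, G r ≤ C * (2 * R ^ (-(1/2) : ℝ)) := by
    calc ∫ r in Set.Ioi R, G r ≤ ∫ r in Set.Ioi R, C * r ^ (-(3/2) : ℝ) :=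
        setIntegral_mono_on hG2b ic measurableSet_Ioi
          (fun r _ => (min_le_right _ _).trans (min_le_right _ _))
      _ = C * ∫ r in Set.Ioi R, r ^ (-(3/2) : ℝ) := integral_const_mul C _
      _ = C * (2 * R ^ (-(1/2) : ℝ)) := by
        rw [integral_Ioi_rpow_of_lt (by norm_num) hR0,
          show (-(3/2) : ℝ) + 1 = -(1/2) by norm_num]
        ring
  -- identify powers of h
  have hRα : R ^ α = h ^ ((-2) * α) := by
    rw [hRdef, ← Real.rpow_mul hh0.le]
  have hRh : R ^ (-(1/2) : ℝ) = h := by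
    rw [hRdef, ← Real.rpow_mul hh0.le]
    norm_num
  have hCh : C * h = h ^ ((-2) * α) := by
    rw [hCdef]
    nth_rewrite 2 [← rpow_one h]
    rw [← rpow_add hh0]
    congr 1
    ring
  set X : ℝ := h ^ ((-2) * α) with hXdef
  have hX0 : 0 < X := rpow_pos_of_pos hh0 _
  set Y : ℝ := h ^ (2 - 2 * α) with hYdef
  have hY0 : 0 < Y := rpow_pos_of_pos hh0 _
  have hp2 : h ^ 2 = h ^ (2:ℝ) := by
    rw [← Real.rpow_natCast h 2]
    norm_num
  have hXY : h ^ 2 * X = Y := by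
    rw [hp2, hXdef, hYdef, ← rpow_add hh0]
    congr 1
    ring
  have hY2 : h ^ 2 ≤ Y := by
    rw [hp2, hYdef]
    exact rpow_le_rpow_of_exponent_ge hh0 hh1 (by linarith)
  have hI3' : ∫ r in Set.Ioi R, G r ≤ 2 * X := by
    refine hI3.trans_eq ?_
    rw [hRh, ← hCh]
    ring
  have hGtotal : ∫ r in Set.Ioi (0:ℝ), G r ≤ 1 / (1 - α) + (X / α + 2 * X) := by
    rw [hsplit]
    refine add_le_add hI1 (add_le_add ?_ hI3')
    rw [← hRα]
    exact hI2
  calc h ^ 2 * ∫ r in Set.Ioi (0:ℝ), f r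
      ≤ h ^ 2 * ∫ r in Set.Ioi (0:ℝ), G r := by
        apply mul_le_mul_of_nonneg_left hfint (by positivity)
    _ ≤ h ^ 2 * (1 / (1 - α) + (X / α + 2 * X)) := by
        apply mul_le_mul_of_nonneg_left hGtotal (by positivity)
    _ = h ^ 2 * (1 / (1 - α)) + ((h ^ 2 * X) / α + 2 * (h ^ 2 * X)) := by ring
    _ = h ^ 2 * (1 / (1 - α)) + (Y / α + 2 * Y) := by rw [hXY]
    _ ≤ Y * (1 / (1 - α)) + (Y / α + 2 * Y) := by gcongr
    _ = (1 / (1 - α) + 1 / α + 2) * Y := by ring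
end

section
/- For every m > 0, α ∈ (0, 1), and θ₁ ∈ [−1, 1] there exists a constant c > 0 such that for all h ∈ (0, 1], all r ≥ 0, and all real x with m ≤ x ≤ h^(−2), one has x^(1 + α + θ₁/2) / |r·e^(iπ/4) − x| ≤ c · min{ h^(min(−2α−θ₁, 0)) / (1 + r^(max(0, −α−θ₁/2))), h^(−2−2α−θ₁) / (1 + r) }. -/
open Real Complex

lemma aux_abs_lower (r x : ℝ) (hr : 0 ≤ r) (hx : 0 ≤ x) :
    (r + x) / 3 ≤ ‖(r : ℂ) * Complex.exp ((Real.pi / 4 : ℝ) * Complex.I) - (x : ℂ)‖ := by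
  set c := Real.sqrt 2 / 2 with hcdef
  have hc : c * c = 1 / 2 := by
    rw [hcdef, div_mul_div_comm, Real.mul_self_sqrt (by norm_num : (0:ℝ) ≤ 2)]
    norm_num
  have hcle : c ≤ 0.75 := by
    have h2 : Real.sqrt 2 ≤ 1.5 := by
      nlinarith [Real.sq_sqrt (by norm_num : (0:ℝ) ≤ 2), Real.sqrt_nonneg 2]
    rw [hcdef]; linarith
  have hexp : Complex.exp ((Real.pi / 4 : ℝ) * Complex.I)
      = ((c : ℝ) : ℂ) + ((c : ℝ) : ℂ) * Complex.I := by
    rw [Complex.exp_mul_I, ← Complex.ofReal_cos, ← Complex.ofReal_sin,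
      Real.cos_pi_div_four, Real.sin_pi_div_four]
  set z := (r : ℂ) * Complex.exp ((Real.pi / 4 : ℝ) * Complex.I) - (x : ℂ) with hz
  have hre : z.re = r * c - x := by rw [hz, hexp]; simp
  have him : z.im = r * c := by rw [hz, hexp]; simp
  have expand : (r * c - x) * (r * c - x) + (r * c) * (r * c)
      = r * r + x * x - 2 * c * (r * x) := by linear_combination (2 * r * r) * hc
  have hsq : ((r + x) / 3) ^ 2 ≤ z.re * z.re + z.im * z.im := by
    rw [hre, him, expand]
    nlinarith [sq_nonneg (r - x), mul_nonneg hr hx,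
      mul_nonneg (mul_nonneg hr hx) (by linarith : (0:ℝ) ≤ 0.75 - c)]
  have habs : ‖z‖ = Real.sqrt (z.re * z.re + z.im * z.im) := by
    rw [Complex.norm_def, Complex.normSq_apply]
  rw [habs]
  calc (r + x) / 3 = Real.sqrt (((r + x) / 3) ^ 2) := (Real.sqrt_sq (by positivity)).symm
    _ ≤ Real.sqrt (z.re * z.re + z.im * z.im) := Real.sqrt_le_sqrt hsq

/-- Scalar inequality underlying the discrete resolvent estimate in Lemma 4.3(i):
for m > 0, α ∈ (0,1), θ₁ ∈ [−1,1] there is c > 0 such that for all h ∈ (0,1],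
r ≥ 0 and m ≤ x ≤ h^(−2),
x^(1+α+θ₁/2)/|r e^(iπ/4) − x|
  ≤ c · min{ h^(min(−2α−θ₁,0)) / (1 + r^(max(0, −α−θ₁/2))), h^(−2−2α−θ₁)/(1 + r) }. -/
theorem scalar_discrete_resolvent_bound (m α θ₁ : ℝ) (hm : 0 < m)
    (hα : α ∈ Set.Ioo (0:ℝ) 1) (hθ₁ : θ₁ ∈ Set.Icc (-1 : ℝ) 1) :
    ∃ c : ℝ, 0 < c ∧ ∀ h ∈ Set.Ioc (0:ℝ) 1, ∀ r : ℝ, 0 ≤ r → ∀ x : ℝ,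
      m ≤ x → x ≤ h ^ (-2 : ℝ) →
      x ^ (1 + α + θ₁ / 2) /
          ‖(r : ℂ) * Complex.exp ((Real.pi / 4 : ℝ) * Complex.I) - (x : ℂ)‖
        ≤ c * min (h ^ (min (-2 * α - θ₁) 0) / (1 + r ^ (max 0 (-α - θ₁ / 2))))
                  (h ^ (-2 - 2 * α - θ₁) / (1 + r)) := by
  obtain ⟨hα0, hα1⟩ := hα
  obtain ⟨hθl, hθr⟩ := hθ₁
  set s : ℝ := α + θ₁ / 2 with hsdef
  set σ : ℝ := max 0 (-α - θ₁ / 2) with hσdef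
  clear_value s
  have hs_lb : -1/2 < s := by rw [hsdef]; linarith
  have hs_ub : s < 3/2 := by rw [hsdef]; linarith
  have h1s : (0:ℝ) < 1 + s := by linarith
  refine ⟨3 * (m ^ (-σ) + 1/m + 2), by positivity, ?_⟩
  intro h hh r hr x hmx hxh
  obtain ⟨hh0, hh1⟩ := hh
  set c : ℝ := 3 * (m ^ (-σ) + 1/m + 2) with hcdef
  have hmσ : (0:ℝ) < m ^ (-σ) := Real.rpow_pos_of_pos hm _
  have h1m : (0:ℝ) < 1/m := by positivity
  have hc6 : (6:ℝ) ≤ c := by rw [hcdef]; linarith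
  have hx0 : (0:ℝ) < x := lt_of_lt_of_le hm hmx
  have hrx : (0:ℝ) < r + x := by linarith
  set A := ‖(r : ℂ) * Complex.exp ((Real.pi / 4 : ℝ) * Complex.I) - (x : ℂ)‖ with hAdef
  have hA : (r + x) / 3 ≤ A := aux_abs_lower r x hr hx0.le
  have hA0 : (0:ℝ) < A := lt_of_lt_of_le (by positivity) hA
  clear_value c A
  have hexp1 : (1:ℝ) + α + θ₁ / 2 = 1 + s := by rw [hsdef]; ring
  have step1 : x ^ (1 + α + θ₁ / 2) / A ≤ 3 * x ^ (1 + s) / (r + x) := by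
    rw [hexp1]
    have heq : 3 * x ^ (1 + s) / (r + x) = x ^ (1 + s) / ((r + x) / 3) := by
      field_simp
    rw [heq]
    gcongr
  refine le_trans step1 ?_
  have hminsplit : c * min (h ^ min (-2 * α - θ₁) 0 / (1 + r ^ σ)) (h ^ (-2 - 2 * α - θ₁) / (1 + r))
      = min (c * (h ^ min (-2 * α - θ₁) 0 / (1 + r ^ σ))) (c * (h ^ (-2 - 2 * α - θ₁) / (1 + r))) := by
    exact mul_min_of_nonneg _ _ (by linarith)
  rw [hminsplit]
  refine le_min ?_ ?_
  · -- first bound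
    have hden : (0:ℝ) < 1 + r ^ σ := by positivity
    have hE : (0:ℝ) < h ^ min (-2 * α - θ₁) 0 := Real.rpow_pos_of_pos hh0 _
    rw [mul_div_assoc', div_le_div_iff₀ hrx hden]
    rcases le_or_gt 0 s with hs | hs
    · -- s ≥ 0
      have hσ0 : σ = 0 := by
        rw [hσdef]; apply max_eq_left; rw [hsdef] at hs; linarith
      have hE1 : min (-2 * α - θ₁) 0 = -2 * α - θ₁ := by
        apply min_eq_left; rw [hsdef] at hs; linarith
      rw [hσ0, Real.rpow_zero, hE1]
      have hxs : x ^ s ≤ h ^ (-2 * α - θ₁) := by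
        have h1 : x ^ s ≤ (h ^ (-2:ℝ)) ^ s := Real.rpow_le_rpow hx0.le hxh hs
        rwa [← Real.rpow_mul hh0.le, show (-2:ℝ) * s = -2 * α - θ₁ by rw [hsdef]; ring] at h1
      have hx1s : x ^ (1 + s) = x * x ^ s := by
        rw [Real.rpow_add hx0, Real.rpow_one]
      have hH : (0:ℝ) < h ^ (-2 * α - θ₁) := Real.rpow_pos_of_pos hh0 _
      have key : 6 * x ≤ c * (r + x) := by
        have := mul_le_mul_of_nonneg_right hc6 hrx.le
        nlinarith
      calc 3 * x ^ (1 + s) * (1 + 1) = 6 * (x * x ^ s) := by rw [hx1s]; ring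
        _ ≤ 6 * (x * h ^ (-2 * α - θ₁)) := by gcongr
        _ = (6 * x) * h ^ (-2 * α - θ₁) := by ring
        _ ≤ (c * (r + x)) * h ^ (-2 * α - θ₁) := by gcongr
        _ = c * h ^ (-2 * α - θ₁) * (r + x) := by ring
    · -- s < 0
      have hslt : α + θ₁ / 2 < 0 := by rw [hsdef] at hs; exact hs
      have hσ0 : σ = -s := by
        rw [hσdef, max_eq_right (by linarith : (0:ℝ) ≤ -α - θ₁ / 2), hsdef]; ring
      have hE1 : min (-2 * α - θ₁) 0 = 0 := min_eq_right (by linarith)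
      rw [hE1, Real.rpow_zero, hσ0]
      have hms : m ^ (-σ) = m ^ s := by rw [hσ0, neg_neg]
      have hxs : x ^ s ≤ m ^ s := Real.rpow_le_rpow_of_nonpos hm hmx hs.le
      have hx1s : x ^ (1 + s) = x * x ^ s := by rw [Real.rpow_add hx0, Real.rpow_one]
      have hexpsum : (1 + s) + (-s) = 1 := by ring
      have hcross : x ^ (1 + s) * r ^ (-s) ≤ r + x := by
        rcases le_total x r with hxr | hrxle
        · have hr0 : (0:ℝ) < r := lt_of_lt_of_le hx0 hxr
          have h2 : x ^ (1 + s) * r ^ (-s) ≤ r ^ (1 + s) * r ^ (-s) :=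
            mul_le_mul_of_nonneg_right (Real.rpow_le_rpow hx0.le hxr h1s.le)
              (Real.rpow_nonneg hr _)
          rw [← Real.rpow_add hr0, hexpsum, Real.rpow_one] at h2
          linarith
        · have h2 : x ^ (1 + s) * r ^ (-s) ≤ x ^ (1 + s) * x ^ (-s) :=
            mul_le_mul_of_nonneg_left (Real.rpow_le_rpow hr hrxle (by linarith))
              (Real.rpow_nonneg hx0.le _)
          rw [← Real.rpow_add hx0, hexpsum, Real.rpow_one] at h2
          linarith
      have hxm : x ^ (1 + s) ≤ x * m ^ s := by
        rw [hx1s]; exact mul_le_mul_of_nonneg_left hxs hx0.le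
      have hms0 : (0:ℝ) < m ^ s := Real.rpow_pos_of_pos hm _
      have hcge : 3 * m ^ s + 3 ≤ c := by rw [hcdef, hms]; linarith
      have hB := mul_le_mul_of_nonneg_right hcge hrx.le
      have hA2 : m ^ s * x ≤ m ^ s * (r + x) :=
        mul_le_mul_of_nonneg_left (by linarith) hms0.le
      linarith [hxm, hcross, hA2, hB]
  · -- second bound
    have hden : (0:ℝ) < 1 + r := by linarith
    rw [mul_div_assoc', div_le_div_iff₀ hrx hden]
    have hxb : x ^ (1 + s) ≤ h ^ (-2 - 2 * α - θ₁) := by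
      have h1 : x ^ (1 + s) ≤ (h ^ (-2:ℝ)) ^ (1 + s) := Real.rpow_le_rpow hx0.le hxh h1s.le
      rwa [← Real.rpow_mul hh0.le,
        show (-2:ℝ) * (1 + s) = -2 - 2 * α - θ₁ by rw [hsdef]; ring] at h1
    have hB0 : (0:ℝ) < h ^ (-2 - 2 * α - θ₁) := Real.rpow_pos_of_pos hh0 _
    have h1r : 1 + r ≤ (1/m + 1) * (r + x) := by
      have h1 : (1:ℝ) ≤ x / m := (one_le_div hm).mpr hmx
      have h2 : (0:ℝ) ≤ r / m := div_nonneg hr hm.le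
      have h3 : x / m = x * (1/m) := by ring
      have h4 : r / m = r * (1/m) := by ring
      nlinarith
    have hcc : 3 * (1/m + 1) ≤ c := by rw [hcdef]; linarith
    calc 3 * x ^ (1 + s) * (1 + r) ≤ 3 * h ^ (-2 - 2 * α - θ₁) * (1 + r) := by gcongr
      _ ≤ 3 * h ^ (-2 - 2 * α - θ₁) * ((1/m + 1) * (r + x)) := by gcongr
      _ ≤ c * h ^ (-2 - 2 * α - θ₁) * (r + x) := by
          have hint := mul_le_mul_of_nonneg_right hcc (mul_nonneg hB0.le hrx.le)
          linarith [hint]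
end
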